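/- Let G be a group and p a prime such that vβ_p(G) is finite, say vβ_p(G) = r. Then every finite-index subgroup H of G has sectional p-rank u_p(H) ≤ r; that is, for every finite quotient F of H and every p-Sylow subgroup S of F, every subgroup of S can be generated by at most r elements. -/

import Mathlib

open CategoryTheory groupCohomology
open scoped TensorProduct

/-! ## The trivial module `ℤ` over the group ring `ℤ[G]` -/

/-- The integers as a module over the group ring `ℤ[G]`, via the augmentation map. -/
def TrivialZMod (G : Type) [Group G] : Type := ℤ

instance (G : Type) [Group G] : AddCommGroup (TrivialZMod G) :=
  inferInstanceAs (AddCommGroup ℤ)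

noncomputable instance (G : Type) [Group G] : Module (MonoidAlgebra ℤ G) (TrivialZMod G) :=
  Module.compHom ℤ ((MonoidAlgebra.lift ℤ ℤ G 1).toRingHom)

/-- The trivial `ℤ[G]`-module `ℤ` as an object of the category of `ℤ[G]`-modules. -/
noncomputable def trivialModuleCat (G : Type) [Group G] : ModuleCat (MonoidAlgebra ℤ G) :=
  ModuleCat.of _ (TrivialZMod G)

/-! ## Finiteness properties FP and FP₂, and almost coherence -/

/-- A group `G` is of type `FP` (over `ℤ`) if the trivial `ℤ[G]`-module `ℤ` admits a projective
resolution which is finitely generated in each degree and zero in all but finitely many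
degrees. -/
def Group.IsFP (G : Type) [Group G] : Prop :=
  ∃ P : ProjectiveResolution (trivialModuleCat G),
    (∀ n, Module.Finite (MonoidAlgebra ℤ G) (P.complex.X n)) ∧
    ∃ N, ∀ n, N ≤ n → Subsingleton (P.complex.X n)

/-- A group `H` is `FP₂` if the trivial `ℤ[H]`-module `ℤ` admits a partial projective resolution
`P₂ → P₁ → P₀ → ℤ → 0` with each `Pᵢ` a finitely generated projective `ℤ[H]`-module. -/
def Group.IsFP2 (H : Type) [Group H] : Prop :=
  ∃ (P₀ P₁ P₂ : Type) (_ : AddCommGroup P₀) (_ : AddCommGroup P₁) (_ : AddCommGroup P₂)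
    (_ : Module (MonoidAlgebra ℤ H) P₀) (_ : Module (MonoidAlgebra ℤ H) P₁)
    (_ : Module (MonoidAlgebra ℤ H) P₂),
    Module.Finite (MonoidAlgebra ℤ H) P₀ ∧ Module.Projective (MonoidAlgebra ℤ H) P₀ ∧
    Module.Finite (MonoidAlgebra ℤ H) P₁ ∧ Module.Projective (MonoidAlgebra ℤ H) P₁ ∧
    Module.Finite (MonoidAlgebra ℤ H) P₂ ∧ Module.Projective (MonoidAlgebra ℤ H) P₂ ∧
    ∃ (d₂ : P₂ →ₗ[MonoidAlgebra ℤ H] P₁) (d₁ : P₁ →ₗ[MonoidAlgebra ℤ H] P₀)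
      (ε : P₀ →ₗ[MonoidAlgebra ℤ H] TrivialZMod H),
      Function.Surjective ε ∧ LinearMap.range d₁ = LinearMap.ker ε ∧
        LinearMap.range d₂ = LinearMap.ker d₁

/-- A group is almost coherent if each of its finitely generated subgroups is `FP₂`. -/
def Group.IsAlmostCoherent (G : Type) [Group G] : Prop :=
  ∀ H : Subgroup G, H.FG → Group.IsFP2 H

/-! ## Poincaré duality groups of dimension 3 -/

/-- A group `G` is a `PD(3)` group if it is of type `FP`, `H³(G; ℤ[G]) ≅ ℤ` and
`Hⁱ(G; ℤ[G]) = 0` for `i ≠ 3`, where `ℤ[G]` is the left regular representation. -/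
def IsPD3 (G : Type) [Group G] : Prop :=
  Group.IsFP G ∧
    (∀ i, i ≠ 3 → Subsingleton (groupCohomology (Rep.leftRegular ℤ G) i)) ∧
    Nonempty ((groupCohomology (Rep.leftRegular ℤ G) 3) ≃ₗ[ℤ] ℤ)

/-! ## Orientability: the `G`-action on `H³(G; ℤ[G])` -/

/-- Right translation by `g` on the left regular representation `ℤ[G]`, as a morphism of
representations (it commutes with the left translation action). -/
noncomputable def rightTranslation (G : Type) [Group G] (g : G) :
    Rep.leftRegular ℤ G ⟶ Rep.leftRegular ℤ G :=
  Rep.ofHom (LinearMap.intertwiningMap_of_isIntertwiningMap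
    (ρ := Representation.ofMulAction ℤ G G) (σ := Representation.ofMulAction ℤ G G)
    (f := MonoidAlgebra.mapDomainLinearMap ℤ ℤ (fun x : G => x * g)) (by
      intro h v
      induction v using MonoidAlgebra.induction_linear with
      | zero => simp
      | add a b ha hb => simp_all [map_add]
      | single x r => simp [MonoidAlgebra.mapDomainLinearMap, mul_assoc]))

/-- The endomorphism of the complex of inhomogeneous cochains of the left regular representation
induced by right translation by `g`. -/
noncomputable def cochainsRightTranslation (G : Type) [Group G] (g : G) :
    inhomogeneousCochains (Rep.leftRegular ℤ G) ⟶
      inhomogeneousCochains (Rep.leftRegular ℤ G) where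
  f n := ModuleCat.ofHom (((rightTranslation G g).hom.toLinearMap : (Rep.leftRegular ℤ G).V →ₗ[ℤ]
      (Rep.leftRegular ℤ G).V).compLeft (Fin n → G))
  comm' := by
    rintro i j (rfl : i + 1 = j)
    have hcomm : ∀ (h : G) (y : (Rep.leftRegular ℤ G).V),
        (rightTranslation G g).hom ((Rep.leftRegular ℤ G).ρ h y) =
          (Rep.leftRegular ℤ G).ρ h ((rightTranslation G g).hom y) :=
      fun h y => Rep.hom_comm_apply _ h y
    ext φ x
    simp [inhomogeneousCochains.d_hom_apply, LinearMap.compLeft, map_add, map_sum, hcomm]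
    refine Finset.sum_congr rfl fun c _ => ?_
    rw [show ((-1 : MonoidAlgebra ℤ G) ^ ((c : ℕ) + 1)) =
        (((-1 : ℤ) ^ ((c : ℕ) + 1) : ℤ) : MonoidAlgebra ℤ G) by simp,
      ← zsmul_eq_mul, ← zsmul_eq_mul, map_zsmul]

/-- The natural action of `g : G` on the group cohomology `Hⁿ(G; ℤ[G])`, induced by the right
translation action of `G` on the coefficients `ℤ[G]`. -/
noncomputable def cohomologyRightTranslation (G : Type) [Group G] (g : G) (n : ℕ) :
    groupCohomology (Rep.leftRegular ℤ G) n ⟶ groupCohomology (Rep.leftRegular ℤ G) n :=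
  HomologicalComplex.homologyMap (cochainsRightTranslation G g) n

/-- A `PD(3)` group is orientable if the natural `G`-action on `H³(G; ℤ[G])` is trivial. -/
def PD3Orientable (G : Type) [Group G] : Prop :=
  ∀ g : G, cohomologyRightTranslation G g 3 = 𝟙 (groupCohomology (Rep.leftRegular ℤ G) 3)

/-! ## Group-theoretic notions -/

/-- A group contains a subgroup isomorphic to the free group of rank 2. -/
def ContainsRank2Free (G : Type) [Group G] : Prop :=
  ∃ H : Subgroup G, Nonempty (H ≃* FreeGroup (Fin 2))

/-- A group is virtually solvable if it has a solvable subgroup of finite index. -/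
def IsVirtuallySolvable (G : Type) [Group G] : Prop :=
  ∃ H : Subgroup G, H.FiniteIndex ∧ IsSolvable H

/-- A group satisfies the Tits alternative if every finitely generated subgroup either contains
a free group of rank 2 or is virtually solvable. -/
def SatisfiesTitsAlternative (G : Type) [Group G] : Prop :=
  ∀ H : Subgroup G, H.FG → ContainsRank2Free H ∨ IsVirtuallySolvable H

/-- A finitely generated torsion-free group is properly locally cyclic if each of its proper
finitely generated subgroups is cyclic. -/
def ProperlyLocallyCyclic (G : Type) [Group G] : Prop :=
  Group.FG G ∧ (∀ g : G, g ≠ 1 → ¬IsOfFinOrder g) ∧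
    ∀ H : Subgroup G, H ≠ ⊤ → H.FG → IsCyclic H

/-- The rank of `G` is at least `n`: no generating set has fewer than `n` elements. -/
def RankAtLeast (G : Type) [Group G] (n : ℕ) : Prop :=
  ∀ s : Finset G, Subgroup.closure (s : Set G) = ⊤ → n ≤ s.card

/-- The Prüfer rank of `G` is at least `n`: some finitely generated subgroup has rank
at least `n`. -/
def PrueferRankAtLeast (G : Type) [Group G] (n : ℕ) : Prop :=
  ∃ H : Subgroup G, H.FG ∧ ∀ s : Finset G, Subgroup.closure (s : Set G) = H → n ≤ s.card

/-- A group is `k`-free if each of its subgroups generated by at most `k` elements is free. -/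
def IsKFree (G : Type) [Group G] (k : ℕ) : Prop :=
  ∀ H : Subgroup G, (∃ s : Finset G, s.card ≤ k ∧ Subgroup.closure (s : Set G) = H) →
    IsFreeGroup H

/-! ## Betti numbers -/

/-- The mod `p` first Betti number `β_p(G) = dim_{F_p} H₁(G; F_p)`, computed as the
`F_p`-dimension of `(G/[G,G]) ⊗ F_p`. -/
noncomputable def betaMod (p : ℕ) (G : Type) [Group G] : Cardinal :=
  Module.rank (ZMod p) (ZMod p ⊗[ℤ] Additive (Abelianization G))

/-- The mod `p` first Betti number as a natural number (`Module.finrank`). -/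
noncomputable def betaModNat (p : ℕ) (G : Type) [Group G] : ℕ :=
  Module.finrank (ZMod p) (ZMod p ⊗[ℤ] Additive (Abelianization G))

/-- The first Betti number `β(G) = dim_ℚ H₁(G; ℚ)`, computed as the `ℚ`-dimension of
`(G/[G,G]) ⊗ ℚ`. -/
noncomputable def betaRat (G : Type) [Group G] : Cardinal :=
  Module.rank ℚ (ℚ ⊗[ℤ] Additive (Abelianization G))

/-! ## Profinite completion -/

/-- The profinite completion of `G` is infinite: `G` has finite quotients of arbitrarily large
cardinality. -/
def HasInfiniteProfiniteCompletion (G : Type) [Group G] : Prop :=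
  ∀ n : ℕ, ∃ (Q : Type) (_ : Group Q) (_ : Fintype Q) (f : G →* Q),
    Function.Surjective f ∧ n ≤ Fintype.card Q

/-- The profinite completion of `G` is finite: `G` has a smallest finite-index subgroup,
i.e. a finite-index subgroup contained in every finite-index subgroup. -/
def HasFiniteProfiniteCompletion (G : Type) [Group G] : Prop :=
  ∃ H : Subgroup G, H.FiniteIndex ∧ ∀ K : Subgroup G, K.FiniteIndex → H ≤ K

/-! ## Surface groups -/

open scoped commutatorElement

/-- The fundamental group of the closed orientable surface of genus `g`:
`⟨a₁,b₁,…,a_g,b_g ∣ [a₁,b₁]⋯[a_g,b_g]⟩`. -/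
def OrientableSurfaceGroup (g : ℕ) : Type :=
  PresentedGroup
    ({(List.ofFn (fun i : Fin g =>
        ⁅FreeGroup.of (i, false), FreeGroup.of (i, true)⁆)).prod} : Set (FreeGroup (Fin g × Bool)))

noncomputable instance (g : ℕ) : Group (OrientableSurfaceGroup g) :=
  inferInstanceAs (Group (PresentedGroup _))

/-- The fundamental group of the closed non-orientable surface of genus `g`:
`⟨a₁,…,a_g ∣ a₁²⋯a_g²⟩`. -/
def NonorientableSurfaceGroup (g : ℕ) : Type :=
  PresentedGroup
    ({(List.ofFn (fun i : Fin g => FreeGroup.of i ^ 2)).prod} : Set (FreeGroup (Fin g)))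

noncomputable instance (g : ℕ) : Group (NonorientableSurfaceGroup g) :=
  inferInstanceAs (Group (PresentedGroup _))

/-- A surface group: a group isomorphic to the fundamental group of a closed aspherical
surface. -/
def IsSurfaceGroup (S : Type) [Group S] : Prop :=
  (∃ g : ℕ, 1 ≤ g ∧ Nonempty (S ≃* OrientableSurfaceGroup g)) ∨
    (∃ g : ℕ, 2 ≤ g ∧ Nonempty (S ≃* NonorientableSurfaceGroup g))

/-- A group contains a surface group. -/
def ContainsSurfaceGroup (G : Type) [Group G] : Prop :=
  ∃ H : Subgroup G, IsSurfaceGroup H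


/-- The sectional `p`-rank of `H` is at most `r`: for every finite quotient `F` of `H`, every
`p`-Sylow subgroup `S` of `F`, and every subgroup `T` of `S`, `T` can be generated by at most
`r` elements. -/
def SectionalPRankAtMost (H : Type) [Group H] (p : ℕ) (r : ℕ) : Prop :=
  ∀ (F : Type) [Group F] [Fintype F], ∀ f : H →* F, Function.Surjective f →
    ∀ S : Sylow p F, ∀ T : Subgroup (S : Subgroup F),
      ∃ s : Finset (S : Subgroup F), s.card ≤ r ∧
        Subgroup.closure (s : Set (S : Subgroup F)) = T

/-- `PSL(2,ℂ)`: the quotient of `SL(2,ℂ)` by its center `{±I}`. -/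
abbrev PSL2C : Type :=
  Matrix.SpecialLinearGroup (Fin 2) ℂ ⧸ Subgroup.center (Matrix.SpecialLinearGroup (Fin 2) ℂ)

/-- A representation `ρ : G → PSL(2,ℂ)` is strictly irreducible if the induced action on `ℂP¹`
has no nonempty invariant subset with fewer than three points.  Points of `ℂP¹` are the
`1`-dimensional subspaces of `ℂ²`, on which `PSL(2,ℂ)` acts via any lift to `SL(2,ℂ)`. -/
def StrictlyIrreducible {G : Type} [Group G] (ρ : G →* PSL2C) : Prop :=
  ¬∃ S : Finset (Submodule ℂ (Fin 2 → ℂ)),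
      S.Nonempty ∧ S.card ≤ 2 ∧ (∀ L ∈ S, Module.finrank ℂ L = 1) ∧
      ∀ (γ : G) (A : Matrix.SpecialLinearGroup (Fin 2) ℂ),
        (QuotientGroup.mk A : PSL2C) = ρ γ →
          ∀ L ∈ S, Submodule.map (Matrix.mulVecLin (A : Matrix (Fin 2) (Fin 2) ℂ)) L ∈ S

/-- Two homomorphisms to `PSL(2,ℂ)` are conjugate in `PSL(2,ℂ)`. -/
def ConjugateReps {G : Type} [Group G] (ρ₁ ρ₂ : G →* PSL2C) : Prop :=
  ∃ c : PSL2C, ∀ γ : G, ρ₂ γ = c * ρ₁ γ * c⁻¹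


theorem aux_beta_le (p : ℕ) (hp : p.Prime) (K T : Type) [Group K] [Group T]
    (ρ : K →* T) (hρ : Function.Surjective ρ) :
    Module.rank (ZMod p) (ZMod p ⊗[ℤ] Additive (Abelianization T)) ≤
      Module.rank (ZMod p) (ZMod p ⊗[ℤ] Additive (Abelianization K)) := by
  haveI : Fact p.Prime := ⟨hp⟩
  have habs : Function.Surjective (Abelianization.map ρ) := by
    intro y
    obtain ⟨t, rfl⟩ := (QuotientGroup.mk'_surjective _ : Function.Surjective
      (Abelianization.of (G := T))) y
    obtain ⟨k, rfl⟩ := hρ t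
    exact ⟨Abelianization.of k, Abelianization.map_of ρ k⟩
  set ℓ : Additive (Abelianization K) →ₗ[ℤ] Additive (Abelianization T) :=
    (MonoidHom.toAdditive (Abelianization.map ρ)).toIntLinearMap with hℓ
  have hℓs : Function.Surjective ℓ := habs
  have hLs : Function.Surjective (LinearMap.lTensor (ZMod p) ℓ) :=
    LinearMap.lTensor_surjective (ZMod p) hℓs
  refine LinearMap.rank_le_of_surjective
    ((LinearMap.lTensor (ZMod p) ℓ).toAddMonoidHom.toZModLinearMap p) ?_
  rw [AddMonoidHom.coe_toZModLinearMap]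
  exact hLs


theorem aux_vanish (p : ℕ) (T Q : Type) [Group T] [CommGroup Q]
    [Module (ZMod p) (Additive Q)]
    (f : T →* Q) (b : Set (ZMod p ⊗[ℤ] Additive (Abelianization T)))
    (hbspan : Submodule.span (ZMod p) b = ⊤)
    (hker : ∀ v ∈ b, ∃ t : T,
      (1 : ZMod p) ⊗ₜ[ℤ] Additive.ofMul (Abelianization.of t) = v ∧ f t = 1)
    (t : T) : f t = 1 := by
  set φz : Additive (Abelianization T) →ₗ[ℤ] Additive Q :=
    (MonoidHom.toAdditive (Abelianization.lift f)).toIntLinearMap with hφz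
  set ψ : (ZMod p ⊗[ℤ] Additive (Abelianization T)) →ₗ[ZMod p] Additive Q :=
    LinearMap.liftBaseChange (ZMod p) φz with hψ
  have hψθ : ∀ u : T,
      ψ ((1 : ZMod p) ⊗ₜ[ℤ] Additive.ofMul (Abelianization.of u)) = Additive.ofMul (f u) := by
    intro u
    rw [hψ]
    rw [LinearMap.liftBaseChange_tmul, one_smul]
    show Additive.ofMul (Abelianization.lift f (Abelianization.of u)) = _
    rw [Abelianization.lift_apply_of]
  have hpsi0 : ψ = 0 := by
    have hle : Submodule.span (ZMod p) b ≤ LinearMap.ker ψ := by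
      apply Submodule.span_le.mpr
      intro v hv
      obtain ⟨u, hu, hfu⟩ := hker v hv
      have := hψθ u
      rw [hu, hfu, ofMul_one] at this
      exact this
    rw [hbspan] at hle
    exact LinearMap.ker_eq_top.mp (top_le_iff.mp hle)
  have := hψθ t
  rw [hpsi0, LinearMap.zero_apply] at this
  have h2 := congrArg Additive.toMul this.symm
  simpa using h2

theorem aux_pgroup_gen (p r : ℕ) (hp : p.Prime) (T : Type) [Group T] [Finite T]
    (hT : IsPGroup p T)
    (h : Module.rank (ZMod p) (ZMod p ⊗[ℤ] Additive (Abelianization T)) ≤ (r : Cardinal)) :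
    ∃ s : Finset T, s.card ≤ r ∧ Subgroup.closure (s : Set T) = ⊤ := by
  classical
  haveI : Fact p.Prime := ⟨hp⟩
  set V := ZMod p ⊗[ℤ] Additive (Abelianization T) with hV
  set θ : T → V := fun t => (1 : ZMod p) ⊗ₜ[ℤ] Additive.ofMul (Abelianization.of t) with hθ
  -- the range of θ spans V over ZMod p
  have hmem : ∀ v : V, v ∈ Submodule.span (ZMod p) (Set.range θ) := by
    have htop : Submodule.span ℤ {x : V | ∃ (c : ZMod p) (m : Additive (Abelianization T)),
        c ⊗ₜ m = x} = ⊤ := TensorProduct.span_tmul_eq_top ℤ (ZMod p) _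
    intro v
    have hv : v ∈ Submodule.span ℤ {x : V | ∃ (c : ZMod p) (m : Additive (Abelianization T)),
        c ⊗ₜ m = x} := by rw [htop]; trivial
    refine Submodule.span_induction ?_ ?_ ?_ ?_ hv
    · rintro x ⟨c, m, rfl⟩
      obtain ⟨t, ht⟩ := (QuotientGroup.mk'_surjective _ : Function.Surjective
        (Abelianization.of (G := T))) (Additive.toMul m)
      have hm : Additive.ofMul (Abelianization.of t) = m :=
        (congrArg Additive.ofMul ht).trans (ofMul_toMul m)
      have hx : c ⊗ₜ[ℤ] m = c • θ t := by
        rw [hθ, ← hm]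
        rw [TensorProduct.smul_tmul', smul_eq_mul, mul_one]
      rw [hx]
      exact Submodule.smul_mem _ _ (Submodule.subset_span ⟨t, rfl⟩)
    · exact Submodule.zero_mem _
    · intro x y _ _ hx hy; exact Submodule.add_mem _ hx hy
    · intro n x _ hx
      exact (Submodule.span (ZMod p) (Set.range θ)).toAddSubgroup.zsmul_mem hx n
  have hspan : Submodule.span (ZMod p) (Set.range θ) = ⊤ :=
    Submodule.eq_top_iff'.mpr hmem
  -- V is a finite type
  haveI : Module.Finite ℤ (Additive (Abelianization T)) := Module.Finite.of_finite
  haveI : Module.Finite (ZMod p) V := Module.Finite.base_change _ _ _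
  haveI : Finite V := Module.finite_of_finite (ZMod p)
  -- extract a linearly independent spanning subset
  obtain ⟨b, hbsub, hbspan, hbind⟩ := exists_linearIndependent (ZMod p) (Set.range θ)
  rw [hspan] at hbspan
  haveI : Fintype b := (Set.toFinite b).fintype
  have hbcard : Fintype.card b ≤ r := by
    have h2 := hbind.cardinal_le_rank'
    rw [Cardinal.mk_fintype] at h2
    exact_mod_cast h2.trans h
  -- choose preimages
  choose g hg using fun v : b => (hbsub v.2 : (v : V) ∈ Set.range θ)
  set s₀ : Finset T := Finset.univ.image g with hs₀
  refine ⟨s₀, le_trans Finset.card_image_le (by simpa using hbcard), ?_⟩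
  by_contra hN
  set N := Subgroup.closure (s₀ : Set T) with hNdef
  -- find a maximal proper subgroup containing N
  have hSfin : ({M : Subgroup T | N ≤ M ∧ M ≠ ⊤}).Finite := Set.toFinite _
  obtain ⟨M, hMS, hMmax⟩ : ∃ M ∈ {M : Subgroup T | N ≤ M ∧ M ≠ ⊤},
      ∀ M' ∈ {M : Subgroup T | N ≤ M ∧ M ≠ ⊤}, M ≤ M' → M = M' := by
    obtain ⟨M, hM⟩ := Set.Finite.exists_maximal hSfin ⟨N, le_refl N, hN⟩
    exact ⟨M, hM.1, fun M' hM' hle => le_antisymm hle (hM.2 hM' hle)⟩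
  obtain ⟨hNM, hMne⟩ := hMS
  -- M is normal by the normalizer condition
  haveI := hT.isNilpotent
  have hnc := normalizerCondition_of_isNilpotent (G := T)
  have hnorm : Subgroup.normalizer (M : Set T) = ⊤ := by
    by_contra hne
    have hlt := hnc M (lt_top_iff_ne_top.mpr hMne)
    exact hlt.ne (hMmax (Subgroup.normalizer (M : Set T)) ⟨hNM.trans Subgroup.le_normalizer, hne⟩ hlt.le)
  haveI hMnormal : M.Normal := Subgroup.normalizer_eq_top_iff.mp hnorm
  -- Q := T ⧸ M is nontrivial
  obtain ⟨t₀, ht₀⟩ : ∃ t : T, t ∉ M := by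
    by_contra hall
    push_neg at hall
    exact hMne ((Subgroup.eq_top_iff' M).mpr hall)
  haveI hQnt : Nontrivial (T ⧸ M) :=
    ⟨⟨QuotientGroup.mk t₀, 1, fun hc => ht₀ ((QuotientGroup.eq_one_iff t₀).mp hc)⟩⟩
  have hQp : IsPGroup p (T ⧸ M) := hT.to_quotient M
  -- every subgroup of T ⧸ M is ⊥ or ⊤
  have hQsub : ∀ W : Subgroup (T ⧸ M), W = ⊥ ∨ W = ⊤ := by
    intro W
    by_cases hW : W = ⊤
    · exact Or.inr hW
    left
    have hker : M ≤ W.comap (QuotientGroup.mk' M) := by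
      intro m hm
      show QuotientGroup.mk' M m ∈ W
      have hm1 : QuotientGroup.mk' M m = 1 := (QuotientGroup.eq_one_iff m).mpr hm
      rw [hm1]; exact W.one_mem
    have hcomapne : W.comap (QuotientGroup.mk' M) ≠ ⊤ := by
      intro hc
      apply hW
      rw [← Subgroup.map_comap_eq_self_of_surjective (QuotientGroup.mk'_surjective M) W, hc]
      rw [← MonoidHom.range_eq_map]
      exact MonoidHom.range_eq_top.mpr (QuotientGroup.mk'_surjective M)
    have hMc : M = W.comap (QuotientGroup.mk' M) :=
      hMmax _ ⟨hNM.trans hker, hcomapne⟩ hker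
    rw [← Subgroup.map_comap_eq_self_of_surjective (QuotientGroup.mk'_surjective M) W, ← hMc]
    rw [eq_bot_iff]
    rintro w ⟨m, hm, rfl⟩
    show QuotientGroup.mk' M m ∈ (⊥ : Subgroup (T ⧸ M))
    rw [Subgroup.mem_bot]
    exact (QuotientGroup.eq_one_iff m).mpr hm
  -- T ⧸ M is cyclic of exponent p
  obtain ⟨x, hx1⟩ := exists_ne (1 : T ⧸ M)
  have hzx : Subgroup.zpowers x = ⊤ :=
    (hQsub _).resolve_left (fun hb => hx1 (Subgroup.zpowers_eq_bot.mp hb))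
  haveI hcyc : IsCyclic (T ⧸ M) := ⟨⟨x, fun y => show y ∈ Subgroup.zpowers x by rw [hzx]; exact Subgroup.mem_top y⟩⟩
  letI : CommGroup (T ⧸ M) := IsCyclic.commGroup
  have hcardQ : ∀ z : T ⧸ M, Subgroup.zpowers z = ⊤ → orderOf z = Nat.card (T ⧸ M) := by
    intro z hz
    rw [← Nat.card_zpowers z, hz]
    exact Nat.card_congr Subgroup.topEquiv.toEquiv
  have hxp : x ^ p = 1 := by
    rw [← Subgroup.zpowers_eq_bot]
    rcases hQsub (Subgroup.zpowers (x ^ p)) with hb | ht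
    · exact hb
    exfalso
    obtain ⟨k, hk⟩ := hQp x
    obtain ⟨j, hjk, hj⟩ := (Nat.dvd_prime_pow hp).mp (orderOf_dvd_of_pow_eq_one hk)
    have hj1 : 1 ≤ j := by
      rcases Nat.eq_zero_or_pos j with h0 | h1
      · exact absurd (orderOf_eq_one_iff.mp (by rw [hj, h0, pow_zero])) hx1
      · exact h1
    have heq : orderOf (x ^ p) = orderOf x := by
      rw [hcardQ _ ht, hcardQ _ hzx]
    have horder : orderOf (x ^ p) = p ^ (j - 1) := by
      rw [orderOf_pow, hj, Nat.gcd_eq_right (dvd_pow_self p (Nat.one_le_iff_ne_zero.mp hj1)),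
        ← Nat.pow_div hj1 hp.pos, pow_one]
    have hlt : p ^ (j - 1) < p ^ j :=
      Nat.pow_lt_pow_right hp.one_lt (Nat.sub_lt hj1 Nat.one_pos)
    rw [horder, hj] at heq
    exact absurd heq hlt.ne
  have hexp : ∀ y : T ⧸ M, y ^ p = 1 := by
    intro y
    have hy : y ∈ Subgroup.zpowers x := by rw [hzx]; exact Subgroup.mem_top y
    obtain ⟨k, rfl⟩ := Subgroup.mem_zpowers_iff.mp hy
    calc (x ^ k) ^ p = (x ^ (p : ℤ)) ^ k := by
          rw [← zpow_natCast, ← zpow_mul, mul_comm, zpow_mul]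
      _ = 1 := by rw [zpow_natCast, hxp, one_zpow]
  letI : Module (ZMod p) (Additive (T ⧸ M)) := AddCommGroup.zmodModule (by
    intro y
    show p • y = 0
    rw [← ofMul_toMul y, ← ofMul_pow, hexp, ofMul_one])
  -- apply the vanishing lemma to the quotient map
  have hvan : ∀ t : T, (QuotientGroup.mk' M : T →* T ⧸ M) t = 1 := by
    intro t
    refine aux_vanish p T (T ⧸ M) (QuotientGroup.mk' M) b hbspan ?_ t
    intro v hv
    refine ⟨g ⟨v, hv⟩, hg ⟨v, hv⟩, ?_⟩
    have hgv : g ⟨v, hv⟩ ∈ N := by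
      apply Subgroup.subset_closure
      simp only [hs₀, Finset.coe_image, Finset.coe_univ, Set.image_univ]
      exact ⟨⟨v, hv⟩, rfl⟩
    exact (QuotientGroup.eq_one_iff _).mpr (hNM hgv)
  exact ht₀ ((QuotientGroup.eq_one_iff t₀).mp (hvan t₀))

/-- If `vβ_p(G) ≤ r`, then every finite-index subgroup `H` of `G` has sectional `p`-rank at
most `r`. -/
theorem sectional_p_rank_le_of_vbeta_le
    (G : Type) [Group G] (p : ℕ) (hp : p.Prime) (r : ℕ)
    (hr : ∀ K : Subgroup G, K.FiniteIndex → betaMod p K ≤ (r : Cardinal))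
    (H : Subgroup G) (hH : H.FiniteIndex) :
    SectionalPRankAtMost H p r := by
  intro F _ _ f hf S T
  classical
  haveI : Fact p.Prime := ⟨hp⟩
  set T' : Subgroup F := T.map (S : Subgroup F).subtype with hT'
  set K₀ : Subgroup H := T'.comap f with hK₀def
  set K : Subgroup G := K₀.map H.subtype with hKdef
  have hKfi : K.FiniteIndex := by
    constructor
    rw [hKdef, Subgroup.index_map, Subgroup.ker_subtype, sup_bot_eq, Subgroup.range_subtype]
    apply mul_ne_zero
    · rw [hK₀def, T'.index_comap_of_surjective hf]
      exact Subgroup.FiniteIndex.index_ne_zero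
    · exact hH.index_ne_zero
  have hKle : K ≤ H := Subgroup.map_subtype_le K₀
  set ι : K →* H := Subgroup.inclusion hKle with hι
  have hmemT' : ∀ k : K, f (ι k) ∈ T' := by
    rintro ⟨x, hx⟩
    obtain ⟨y, hy, hyx⟩ := hx
    have hyι : ι ⟨x, ⟨y, hy, hyx⟩⟩ = y := Subtype.ext hyx.symm
    rw [hyι]
    exact hy
  set π : K →* T' := (f.comp ι).codRestrict T' hmemT' with hπ
  have hπs : Function.Surjective π := by
    rintro ⟨t', ht'⟩
    obtain ⟨h0, rfl⟩ := hf t'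
    have hh0 : h0 ∈ K₀ := ht'
    have hmem : (h0 : G) ∈ K := ⟨h0, hh0, rfl⟩
    exact ⟨⟨(h0 : G), hmem⟩, rfl⟩
  set e : ↥T ≃* ↥T' :=
    Subgroup.equivMapOfInjective T (S : Subgroup F).subtype
      (Subgroup.subtype_injective (S : Subgroup F)) with he
  set ρ : ↥K →* ↥T := e.symm.toMonoidHom.comp π with hρ
  have hρs : Function.Surjective ρ := e.symm.surjective.comp hπs
  have hTp : IsPGroup p ↥T := S.isPGroup'.to_subgroup T
  have h2 : Module.rank (ZMod p) (ZMod p ⊗[ℤ] Additive (Abelianization ↥K)) ≤ (r : Cardinal) :=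
    hr K hKfi
  obtain ⟨s, hs_card, hs_top⟩ :=
    aux_pgroup_gen p r hp ↥T hTp ((aux_beta_le p hp ↥K ↥T ρ hρs).trans h2)
  refine ⟨s.image (fun x : ↥T => (x : ↥(S : Subgroup F))),
    le_trans Finset.card_image_le hs_card, ?_⟩
  have h1 : ((s.image (fun x : ↥T => (x : ↥(S : Subgroup F)))) : Set ↥(S : Subgroup F)) =
      (T.subtype) '' ↑s := by
    rw [Finset.coe_image]
    rfl
  rw [h1, ← MonoidHom.map_closure, hs_top, ← MonoidHom.range_eq_map, Subgroup.range_subtype]
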